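/- arXiv:2305.11154 — 4 statements merged into one kernel-verified Lean document; each statement's English description precedes it below -/
import Mathlib

section
/- Let B : [0,∞) → B(h) be a continuous family of positive self-adjoint operators (B_t ≥ 0 for all t), and for fixed s ≥ 0 let V : [s,∞) → B(h) be the continuously differentiable solution of ∂_t V_t = -8 B_t V_t with V_s = 1. Then V_t V_t* ≤ 1 for all t ≥ s; in particular ‖V_t‖_op ≤ 1. -/
open ContinuousLinearMap Set Filter

noncomputable section

variable {H : Type*} [NormedAddCommGroup H] [InnerProductSpace ℂ H] [CompleteSpace H]

/-- If `B_t ≥ 0` is a continuous family of positive operators and `V` solves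
`∂ₜV_t = -8 B_t V_t` with `V_s = 1`, then `V_t V_t* ≤ 1`; in particular `‖V_t‖ ≤ 1`. -/
theorem contraction_of_positive_generator
    (B : ℝ → H →L[ℂ] H) (hBcont : ContinuousOn B (Ici 0))
    (hBpos : ∀ t : ℝ, 0 ≤ t → (B t).IsPositive)
    (s : ℝ) (hs : 0 ≤ s) (V : ℝ → H →L[ℂ] H) (hVs : V s = 1)
    (hV : ∀ t : ℝ, s ≤ t →
      HasDerivWithinAt V ((-8 : ℂ) • (B t * V t)) (Ici s) t) :
    ∀ t : ℝ, s ≤ t →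
      ((1 : H →L[ℂ] H) - V t * adjoint (V t)).IsPositive ∧ ‖V t‖ ≤ 1 := by
  have key : ∀ t : ℝ, s ≤ t → ‖V t‖ ≤ 1 := by
    intro t ht
    refine opNorm_le_bound _ zero_le_one fun ψ => ?_
    rw [one_mul]
    -- derivative of `u ↦ V u ψ`
    have hVψ : ∀ u : ℝ, s ≤ u →
        HasDerivWithinAt (fun u => V u ψ) ((-8 : ℂ) • (B u) (V u ψ)) (Ici s) u := by
      intro u hu
      have := ((ContinuousLinearMap.apply ℂ H ψ).restrictScalars ℝ).hasFDerivAt.comp_hasDerivWithinAt u (hV u hu)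
      simpa [Function.comp_def] using this
    set f : ℝ → ℝ := fun u => RCLike.re (inner ℂ (V u ψ) (V u ψ) : ℂ) with hfdef
    have hfval : ∀ u : ℝ, f u = ‖V u ψ‖ ^ 2 := fun u => inner_self_eq_norm_sq _
    have hderiv : ∀ u : ℝ, s ≤ u →
        HasDerivWithinAt f
          (RCLike.re ((inner ℂ (V u ψ) ((-8 : ℂ) • (B u) (V u ψ)) : ℂ)
            + (inner ℂ ((-8 : ℂ) • (B u) (V u ψ)) (V u ψ) : ℂ))) (Ici s) u := by
      intro u hu
      exact (Complex.reCLM.hasFDerivAt).comp_hasDerivWithinAt u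
        ((hVψ u hu).inner ℂ (hVψ u hu))
    have hd_nonpos : ∀ u : ℝ, s ≤ u →
        RCLike.re ((inner ℂ (V u ψ) ((-8 : ℂ) • (B u) (V u ψ)) : ℂ)
            + (inner ℂ ((-8 : ℂ) • (B u) (V u ψ)) (V u ψ) : ℂ)) ≤ 0 := by
      intro u hu
      have hpos : 0 ≤ RCLike.re (inner ℂ ((B u) (V u ψ)) (V u ψ) : ℂ) :=
        (hBpos u (hs.trans hu)).2 (V u ψ)
      have h1 : (inner ℂ (V u ψ) ((-8 : ℂ) • (B u) (V u ψ)) : ℂ)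
          = (-8 : ℂ) * (inner ℂ (V u ψ) ((B u) (V u ψ)) : ℂ) := inner_smul_right _ _ _
      have hc : (starRingEnd ℂ) (-8 : ℂ) = -8 := by simp [Complex.ext_iff]
      have h2 : (inner ℂ ((-8 : ℂ) • (B u) (V u ψ)) (V u ψ) : ℂ)
          = (-8 : ℂ) * (inner ℂ ((B u) (V u ψ)) (V u ψ) : ℂ) := by
        rw [inner_smul_left, hc]
      have h3 : (inner ℂ (V u ψ) ((B u) (V u ψ)) : ℂ)
          = starRingEnd ℂ (inner ℂ ((B u) (V u ψ)) (V u ψ) : ℂ) := (inner_conj_symm _ _).symm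
      rw [h1, h2, h3]
      simp only [RCLike.re_to_complex, Complex.add_re, Complex.mul_re, Complex.conj_re,
        Complex.conj_im]
      simp only [RCLike.re_to_complex] at hpos
      norm_num
      nlinarith [hpos]
    -- antitone
    have hmono : AntitoneOn f (Ici s) := by
      refine antitoneOn_of_deriv_nonpos (convex_Ici s) ?_ ?_ ?_
      · intro u hu
        exact ((hderiv u hu).continuousWithinAt)
      · intro u hu
        rw [interior_Ici] at hu
        exact (((hderiv u (le_of_lt hu)).hasDerivAt
          (Ici_mem_nhds hu)).differentiableAt).differentiableWithinAt
      · intro u hu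
        rw [interior_Ici] at hu
        rw [((hderiv u (le_of_lt hu)).hasDerivAt (Ici_mem_nhds hu)).deriv]
        exact hd_nonpos u (le_of_lt hu)
    have hle : f t ≤ f s := hmono (self_mem_Ici) ht ht
    rw [hfval, hfval, hVs] at hle
    simp only [ContinuousLinearMap.one_apply] at hle
    nlinarith [hle, norm_nonneg (V t ψ), norm_nonneg ψ]
  intro t ht
  refine ⟨⟨?_, ?_⟩, key t ht⟩
  · -- self-adjointness
    have h1 : IsSelfAdjoint (V t * adjoint (V t)) := by
      rw [IsSelfAdjoint, star_mul]
      simp [star_eq_adjoint, adjoint_adjoint]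
    exact ((IsSelfAdjoint.one _).sub h1).isSymmetric
  · intro x
    have hAd : ‖adjoint (V t) x‖ ≤ ‖x‖ := by
      calc ‖adjoint (V t) x‖ ≤ ‖adjoint (V t)‖ * ‖x‖ := le_opNorm _ _
        _ ≤ 1 * ‖x‖ := by
            have hn : ‖adjoint (V t)‖ = ‖V t‖ := by
              exact LinearIsometryEquiv.norm_map _ _
            exact mul_le_mul_of_nonneg_right (hn ▸ key t ht) (norm_nonneg _)
        _ = ‖x‖ := one_mul _
    have hre : reApplyInnerSelf ((1 : H →L[ℂ] H) - V t * adjoint (V t)) x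
        = ‖x‖ ^ 2 - ‖adjoint (V t) x‖ ^ 2 := by
      simp only [reApplyInnerSelf, sub_apply, one_apply, inner_sub_left, map_sub]
      congr 1
      · exact inner_self_eq_norm_sq _
      · rw [ContinuousLinearMap.mul_apply, inner_re_symm, ← adjoint_inner_left]
        exact inner_self_eq_norm_sq _
    rw [hre]
    have := pow_le_pow_left₀ (norm_nonneg _) hAd 2
    linarith
end
end

section
/- Let Υ₀ ∈ B(h) be self-adjoint, D₀ ∈ B(h) with D₀^⊤ = D₀ or D₀^⊤ = -D₀, and let (Δ, D) be a solution of the elliptic flow with data (Υ₀, D₀). Let μ ∈ ℝ and ε > 0 satisfy Υ₀ ≥ -(μ-ε)·1, and define 𝔅_t := D_t (Υ_t^⊤ + μ·1)^{-1} D_t* and 𝔇_t := Υ_t - μ·1 + 4𝔅_t, where Υ_t := Υ₀ + Δ_t. Then for all t ≥ 0 one has ∂_t 𝔅_t = -2(𝔇_t 𝔅_t + 𝔅_t 𝔇_t) - 4 D_t D_t* and ∂_t 𝔇_t = -8(𝔇_t 𝔅_t + 𝔅_t 𝔇_t), the derivatives being taken in operator norm. -/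
open ContinuousLinearMap Set Filter
open scoped InnerProductSpace

noncomputable section

/-- A conjugation on a complex Hilbert space: an antilinear involution `C` with
`⟪Cf, Cg⟫ = ⟪g, f⟫`. -/
structure Conjugation (H : Type*) [NormedAddCommGroup H] [InnerProductSpace ℂ H] where
  toFun : H → H
  map_add : ∀ x y, toFun (x + y) = toFun x + toFun y
  map_smul : ∀ (a : ℂ) (x : H), toFun (a • x) = (starRingEnd ℂ) a • toFun x
  invol : ∀ x, toFun (toFun x) = x
  inner_conj : ∀ f g : H, (inner ℂ (toFun f) (toFun g) : ℂ) = (inner ℂ g f : ℂ)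

variable {H : Type*} [NormedAddCommGroup H] [InnerProductSpace ℂ H] [CompleteSpace H]

/-- `transp` implements the transpose `X ↦ C X* C` associated with the conjugation `C`. -/
def IsTranspose (C : Conjugation H) (transp : (H →L[ℂ] H) → (H →L[ℂ] H)) : Prop :=
  ∀ (X : H →L[ℂ] H) (x : H), transp X x = C.toFun (adjoint X (C.toFun x))

/-- A (global, continuously differentiable in operator norm) solution `(Δ, D)` of the
elliptic flow `∂ₜΔ_t = 16 D_t D_t*`, `∂ₜD_t = -2(Υ_t D_t + D_t Υ_tᵀ)`, `Υ_t := Υ₀ + Δ_t`,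
with initial data `Δ 0 = 0`, `D 0 = D₀`. -/
def IsEllipticFlow (transp : (H →L[ℂ] H) → (H →L[ℂ] H))
    (Υ₀ D₀ : H →L[ℂ] H) (Δ D : ℝ → H →L[ℂ] H) : Prop :=
  Δ 0 = 0 ∧ D 0 = D₀ ∧
    ∀ t : ℝ, 0 ≤ t →
      HasDerivWithinAt Δ ((16 : ℂ) • (D t * adjoint (D t))) (Ici 0) t ∧
      HasDerivWithinAt D
        ((-2 : ℂ) • ((Υ₀ + Δ t) * D t + D t * transp (Υ₀ + Δ t))) (Ici 0) t

/-- The operator `𝔅_t := D_t (Υ_tᵀ + μ·1)⁻¹ D_t*`, where `Υ_t := Υ₀ + Δ_t`. -/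
def frakB (transp : (H →L[ℂ] H) → (H →L[ℂ] H)) (Υ₀ : H →L[ℂ] H) (μ : ℝ)
    (Δ D : ℝ → H →L[ℂ] H) (t : ℝ) : H →L[ℂ] H :=
  D t * Ring.inverse (transp (Υ₀ + Δ t) + (μ : ℂ) • 1) * adjoint (D t)

/-- The operator `𝔇_t := Υ_t - μ·1 + 4𝔅_t`, where `Υ_t := Υ₀ + Δ_t`. -/
def frakD (transp : (H →L[ℂ] H) → (H →L[ℂ] H)) (Υ₀ : H →L[ℂ] H) (μ : ℝ)
    (Δ D : ℝ → H →L[ℂ] H) (t : ℝ) : H →L[ℂ] H :=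
  (Υ₀ + Δ t) - (μ : ℂ) • 1 + (4 : ℂ) • frakB transp Υ₀ μ Δ D t

namespace EllipticFlowAux

omit [CompleteSpace H] in
lemma Conjugation.norm_toFun (C : Conjugation H) (x : H) : ‖C.toFun x‖ = ‖x‖ := by
  have h := C.inner_conj x x
  rw [inner_self_eq_norm_sq_to_K, inner_self_eq_norm_sq_to_K] at h
  have h2 : (‖C.toFun x‖ : ℝ) ^ 2 = ‖x‖ ^ 2 := by
    exact_mod_cast congrArg Complex.re h
  nlinarith [norm_nonneg (C.toFun x), norm_nonneg x]

section Transp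

variable {C : Conjugation H} {transp : (H →L[ℂ] H) → (H →L[ℂ] H)}
  (ht : IsTranspose C transp)

include ht

lemma transp_add (X Y : H →L[ℂ] H) : transp (X + Y) = transp X + transp Y := by
  ext x
  rw [ContinuousLinearMap.add_apply, ht, ht, ht, map_add, ContinuousLinearMap.add_apply,
    C.map_add]

lemma transp_smul (a : ℂ) (X : H →L[ℂ] H) : transp (a • X) = a • transp X := by
  ext x
  rw [ContinuousLinearMap.smul_apply, ht, ht,
    map_smulₛₗ (ContinuousLinearMap.adjoint (𝕜 := ℂ) (E := H) (F := H)) a X,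
    ContinuousLinearMap.smul_apply, C.map_smul]
  simp

lemma norm_transp_le (X : H →L[ℂ] H) : ‖transp X‖ ≤ ‖X‖ := by
  refine ContinuousLinearMap.opNorm_le_bound _ (norm_nonneg X) fun x => ?_
  rw [ht X x, Conjugation.norm_toFun]
  calc ‖adjoint X (C.toFun x)‖ ≤ ‖adjoint X‖ * ‖C.toFun x‖ := le_opNorm _ _
    _ = ‖X‖ * ‖x‖ := by rw [Conjugation.norm_toFun, adjoint.norm_map]

lemma transp_mul (X Y : H →L[ℂ] H) : transp (X * Y) = transp Y * transp X := by
  ext x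
  rw [ContinuousLinearMap.mul_apply, ht, ht, ht]
  have hco : adjoint (X * Y) = adjoint Y * adjoint X := by
    rw [ContinuousLinearMap.mul_def, adjoint_comp, ContinuousLinearMap.mul_def]
  rw [hco, ContinuousLinearMap.mul_apply, C.invol]

lemma transp_one : transp (1 : H →L[ℂ] H) = 1 := by
  ext x
  rw [ht]
  have : adjoint (1 : H →L[ℂ] H) = 1 := by
    rw [ContinuousLinearMap.one_def, adjoint_id]
  rw [this, ContinuousLinearMap.one_apply, C.invol, ContinuousLinearMap.one_apply]

lemma adjoint_transp (X : H →L[ℂ] H) : adjoint (transp X) = transp (adjoint X) := by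
  have key : ∀ (a b : H), (inner ℂ a (C.toFun b) : ℂ) = inner ℂ b (C.toFun a) := by
    intro a b
    conv_lhs => rw [← C.invol a]
    rw [C.inner_conj]
  ext x
  refine ext_inner_left ℂ fun y => ?_
  rw [adjoint_inner_right, ht X, ht (adjoint X), adjoint_adjoint, key y (X (C.toFun x))]
  conv_lhs => rw [← C.invol x]
  rw [C.inner_conj, adjoint_inner_right]

lemma transp_transp (X : H →L[ℂ] H) : transp (transp X) = X := by
  ext x
  rw [ht, adjoint_transp ht, ht, adjoint_adjoint, C.invol, C.invol]

lemma transp_isUnit {X : H →L[ℂ] H} (h : IsUnit X) : IsUnit (transp X) := by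
  obtain ⟨u, rfl⟩ := h
  exact ⟨⟨transp ↑u, transp ↑u⁻¹,
    by rw [← transp_mul ht, u.inv_mul, transp_one ht],
    by rw [← transp_mul ht, u.mul_inv, transp_one ht]⟩, rfl⟩

lemma exists_transpL : ∃ L : (H →L[ℂ] H) →L[ℂ] (H →L[ℂ] H), ⇑L = transp :=
  ⟨LinearMap.mkContinuous ⟨⟨transp, transp_add ht⟩, transp_smul ht⟩ 1
    (fun X => by simpa using norm_transp_le ht X), rfl⟩

lemma hasDerivWithinAt_transp {f : ℝ → H →L[ℂ] H} {f' : H →L[ℂ] H} {s : Set ℝ} {x : ℝ}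
    (hf : HasDerivWithinAt f f' s x) :
    HasDerivWithinAt (fun u => transp (f u)) (transp f') s x := by
  obtain ⟨L, hL⟩ := exists_transpL ht
  have h := ((L.restrictScalars ℝ).hasFDerivAt (x := f x)).comp_hasDerivWithinAt x hf
  simpa [hL, Function.comp_def] using h

lemma continuous_transp : Continuous transp := by
  obtain ⟨L, hL⟩ := exists_transpL ht
  exact hL ▸ L.continuous

end Transp

lemma aux_sym_alg (σ : ℂ) (Y T P d : H →L[ℂ] H) :
    ((-2 : ℂ) • (d * T + Y * d)) - σ • ((-2 : ℂ) • (Y * P + P * T))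
    = (-2 : ℂ) • (Y * (d - σ • P) + (d - σ • P) * T) := by
  simp only [smul_add, smul_sub, mul_sub, sub_mul, smul_smul, smul_mul_assoc, mul_smul_comm]
  module

lemma aux_norm_bound (A B E0 : H →L[ℂ] H) (Cb : ℝ) (hA : ‖A‖ ≤ Cb) (hB : ‖B‖ ≤ Cb) :
    ‖(-2 : ℂ) • (A * E0 + E0 * B)‖ ≤ 4 * Cb * ‖E0‖ + 0 := by
  have h0 : 0 ≤ ‖E0‖ := norm_nonneg _
  have h1 : ‖A * E0 + E0 * B‖ ≤ ‖A‖ * ‖E0‖ + ‖E0‖ * ‖B‖ :=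
    (norm_add_le _ _).trans (add_le_add (norm_mul_le _ _) (norm_mul_le _ _))
  have h2 : ‖(-2 : ℂ) • (A * E0 + E0 * B)‖ = 2 * ‖A * E0 + E0 * B‖ := by
    rw [norm_smul]; norm_num
  rw [h2]
  nlinarith

lemma aux_final (P S : H →L[ℂ] H) :
    (16:ℂ) • P + (4:ℂ) • ((-2:ℂ) • S - (4:ℂ) • P) = (-8:ℂ) • S := by
  module

lemma aux_main_alg (Y T R d e : H →L[ℂ] H) (μ : ℂ)
    (hTRe : T * (R * e) = e - μ • (R * e))
    (hRTe : R * (T * e) = e - μ • (R * e)) :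
    ((-2:ℂ) • (Y * d + d * T) * R
        + d * (-(R * ((16:ℂ) • (e * d)) * R))) * e
      + d * R * ((-2:ℂ) • (e * Y + T * e))
    = (-2:ℂ) • ((Y - μ • 1 + (4:ℂ) • (d * R * e)) * (d * R * e)
        + (d * R * e) * (Y - μ • 1 + (4:ℂ) • (d * R * e)))
      - (4:ℂ) • (d * e) := by
  simp only [smul_add, smul_sub, sub_mul, mul_sub, add_mul, mul_add, neg_mul, mul_neg,
    smul_mul_assoc, mul_smul_comm, smul_smul, mul_one, one_mul, mul_assoc, hTRe, hRTe]
  module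

end EllipticFlowAux

open EllipticFlowAux

set_option maxHeartbeats 2000000 in
/-- Differentiability of `𝔅` and `𝔇` along the elliptic flow. -/
theorem frakB_frakD_derivatives
    (Υ₀ D₀ : H →L[ℂ] H) (hΥ₀ : IsSelfAdjoint Υ₀)
    (C : Conjugation H) (transp : (H →L[ℂ] H) → (H →L[ℂ] H))
    (htransp : IsTranspose C transp)
    (hD₀sym : transp D₀ = D₀ ∨ transp D₀ = -D₀)
    (μ ε : ℝ) (hε : 0 < ε)
    (hbound : (Υ₀ + ((μ - ε : ℝ) : ℂ) • (1 : H →L[ℂ] H)).IsPositive)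
    (Δ D : ℝ → H →L[ℂ] H) (hflow : IsEllipticFlow transp Υ₀ D₀ Δ D) :
    ∀ t : ℝ, 0 ≤ t →
      HasDerivWithinAt (frakB transp Υ₀ μ Δ D)
        ((-2 : ℂ) • (frakD transp Υ₀ μ Δ D t * frakB transp Υ₀ μ Δ D t
            + frakB transp Υ₀ μ Δ D t * frakD transp Υ₀ μ Δ D t)
          - (4 : ℂ) • (D t * adjoint (D t))) (Ici 0) t ∧
      HasDerivWithinAt (frakD transp Υ₀ μ Δ D)
        ((-8 : ℂ) • (frakD transp Υ₀ μ Δ D t * frakB transp Υ₀ μ Δ D t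
            + frakB transp Υ₀ μ Δ D t * frakD transp Υ₀ μ Δ D t)) (Ici 0) t := by
  obtain ⟨hΔ0, hD0, hderiv⟩ := hflow
  -- continuity of the flow
  have contΔ : ContinuousOn Δ (Ici 0) := fun s hs => ((hderiv s hs).1).continuousWithinAt
  have contD : ContinuousOn D (Ici 0) := fun s hs => ((hderiv s hs).2).continuousWithinAt
  -- self-adjointness of Δ
  have hΔsa : ∀ s : ℝ, 0 ≤ s → IsSelfAdjoint (Δ s) := by
    intro b hb
    have hcont : ContinuousOn (fun s => Δ s - star (Δ s)) (Icc 0 b) :=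
      (contΔ.mono Icc_subset_Ici_self).sub
        (continuous_star.comp_continuousOn (contΔ.mono Icc_subset_Ici_self))
    have hder : ∀ x ∈ Ico (0:ℝ) b,
        HasDerivWithinAt (fun s => Δ s - star (Δ s)) 0 (Ici x) x := by
      intro x hx
      have h1 := (hderiv x hx.1).1.mono (Ici_subset_Ici.2 hx.1)
      have h2 := h1.sub h1.star
      have h3 : (16 : ℂ) • (D x * adjoint (D x))
          - star ((16 : ℂ) • (D x * adjoint (D x))) = 0 := by
        rw [star_smul, star_mul, star_eq_adjoint, star_eq_adjoint, adjoint_adjoint]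
        simp [Complex.star_def]
      rwa [h3] at h2
    have key := constant_of_has_deriv_right_zero hcont hder b ⟨hb, le_rfl⟩
    rw [hΔ0] at key
    simp only [star_zero, sub_zero] at key
    exact (sub_eq_zero.mp key).symm
  have hΥsa : ∀ s : ℝ, 0 ≤ s → IsSelfAdjoint (Υ₀ + Δ s) := fun s hs => hΥ₀.add (hΔsa s hs)
  -- positivity of Δ
  have hΔpos : ∀ s : ℝ, 0 ≤ s → (Δ s).IsPositive := by
    intro b hb
    refine ⟨ContinuousLinearMap.isSelfAdjoint_iff_isSymmetric.mp (hΔsa b hb), fun φ => ?_⟩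
    set q : (H →L[ℂ] H) →L[ℝ] ℝ :=
      (Complex.reCLM.comp ((innerSL ℂ φ).restrictScalars ℝ)).comp
        ((ContinuousLinearMap.apply ℂ H φ).restrictScalars ℝ) with hq
    have hqval : ∀ X : H →L[ℂ] H, q X = Complex.re (inner ℂ φ (X φ)) := fun X => rfl
    have hcont : ContinuousOn (fun s => -(q (Δ s))) (Icc 0 b) :=
      (q.continuous.comp_continuousOn (contΔ.mono Icc_subset_Ici_self)).neg
    have hder : ∀ x ∈ Ico (0:ℝ) b,
        HasDerivWithinAt (fun s => -(q (Δ s)))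
          (-(q ((16 : ℂ) • (D x * adjoint (D x))))) (Ici x) x := by
      intro x hx
      exact ((q.hasFDerivAt).comp_hasDerivWithinAt x
        ((hderiv x hx.1).1.mono (Ici_subset_Ici.2 hx.1))).neg
    have hbnd : ∀ x ∈ Ico (0:ℝ) b, -(q ((16 : ℂ) • (D x * adjoint (D x)))) ≤ 0 := by
      intro x _
      rw [neg_nonpos]
      rw [hqval]
      have : (inner ℂ φ (((16 : ℂ) • (D x * adjoint (D x))) φ) : ℂ)
          = 16 * inner ℂ (adjoint (D x) φ) (adjoint (D x) φ) := by
        rw [ContinuousLinearMap.smul_apply, inner_smul_right, ContinuousLinearMap.mul_apply,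
          ← adjoint_inner_left]
      rw [this, Complex.mul_re]
      have hre : 0 ≤ (⟪adjoint (D x) φ, adjoint (D x) φ⟫_ℂ).re := by
        rw [← RCLike.re_to_complex]
        exact inner_self_nonneg
      have him : (⟪adjoint (D x) φ, adjoint (D x) φ⟫_ℂ).im = 0 := by
        rw [← RCLike.im_to_complex]
        exact inner_self_im _
      rw [him]
      norm_num
      rw [← Complex.ofReal_pow, Complex.ofReal_re]
      positivity
    have key := image_le_of_deriv_right_le_deriv_boundary hcont hder
      (B := fun _ => (0:ℝ)) (B' := fun _ => (0:ℝ))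
      (by simp [hΔ0, hqval]) continuousOn_const
      (fun x _ => hasDerivWithinAt_const x _ 0) hbnd (show b ∈ Icc 0 b from ⟨hb, le_rfl⟩)
    have h1 : 0 ≤ q (Δ b) := neg_nonpos.mp (by simpa using key)
    rw [hqval] at h1
    have h2 : (Δ b).reApplyInnerSelf φ = Complex.re (inner ℂ φ (Δ b φ) : ℂ) := by
      rw [ContinuousLinearMap.reApplyInnerSelf_apply, ← inner_conj_symm]
      exact (Complex.conj_re _).symm
    rw [h2]
    exact h1
  -- invertibility
  have hunit : ∀ s : ℝ, 0 ≤ s → IsUnit ((Υ₀ + Δ s) + (μ : ℂ) • 1) := by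
    intro s hs
    have haU : IsUnit ((ε:ℂ) • (1 : H →L[ℂ] H)) := by
      have h1 : ((ε:ℂ)⁻¹ • (1:H →L[ℂ] H)) * ((ε:ℂ) • 1) = 1 := by
        rw [smul_mul_smul_comm, one_mul,
          inv_mul_cancel₀ (Complex.ofReal_ne_zero.2 hε.ne'), one_smul]
      have h2 : ((ε:ℂ) • (1:H →L[ℂ] H)) * ((ε:ℂ)⁻¹ • 1) = 1 := by
        rw [smul_mul_smul_comm, one_mul,
          mul_inv_cancel₀ (Complex.ofReal_ne_zero.2 hε.ne'), one_smul]
      exact ⟨⟨(ε:ℂ) • 1, (ε:ℂ)⁻¹ • 1, h2, h1⟩, rfl⟩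
    have haP : ((ε:ℂ) • (1 : H →L[ℂ] H)).IsPositive := by
      constructor
      · rw [← ContinuousLinearMap.isSelfAdjoint_iff_isSymmetric, IsSelfAdjoint, star_smul, star_one, Complex.star_def, Complex.conj_ofReal]
      · intro x
        simp only [reApplyInnerSelf_apply, ContinuousLinearMap.smul_apply,
          ContinuousLinearMap.one_apply, inner_smul_left, Complex.conj_ofReal]
        rw [inner_self_eq_norm_sq_to_K (𝕜 := ℂ), ← RCLike.ofReal_pow]
        simp only [RCLike.mul_re, RCLike.re_to_complex, RCLike.im_to_complex,
          Complex.ofReal_re, Complex.ofReal_im, RCLike.ofReal_re, RCLike.ofReal_im,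
          zero_mul, mul_zero, sub_zero]
        positivity
    have ha0 : (0 : H →L[ℂ] H) ≤ (ε:ℂ) • 1 :=
      (ContinuousLinearMap.nonneg_iff_isPositive _).2 haP
    have hab : ((ε:ℂ) • (1 : H →L[ℂ] H)) ≤ (Υ₀ + Δ s) + (μ : ℂ) • 1 := by
      rw [ContinuousLinearMap.le_def]
      have hcast : ((μ - ε : ℝ) : ℂ) = (μ : ℂ) - (ε : ℂ) := by push_cast; ring
      have heq : (Υ₀ + Δ s) + (μ : ℂ) • 1 - (ε:ℂ) • (1 : H →L[ℂ] H)
          = (Υ₀ + ((μ - ε : ℝ) : ℂ) • 1) + Δ s := by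
        rw [hcast, sub_smul]; abel
      rw [heq]
      exact hbound.add (hΔpos s hs)
    exact CStarAlgebra.isUnit_of_le _ hab (haU.isStrictlyPositive ha0)
  have hunitT : ∀ s : ℝ, 0 ≤ s → IsUnit (transp (Υ₀ + Δ s) + (μ : ℂ) • 1) := by
    intro s hs
    have heq : transp (Υ₀ + Δ s) + (μ:ℂ) • 1 = transp ((Υ₀ + Δ s) + (μ:ℂ) • 1) := by
      conv_rhs => rw [transp_add htransp, transp_smul htransp, transp_one htransp]
    rw [heq]
    exact transp_isUnit htransp (hunit s hs)
  -- symmetry of D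
  obtain ⟨σ, hσpm, hσD₀⟩ : ∃ σ : ℂ, (σ = 1 ∨ σ = -1) ∧ transp D₀ = σ • D₀ := by
    rcases hD₀sym with h | h
    · exact ⟨1, Or.inl rfl, by simpa using h⟩
    · exact ⟨-1, Or.inr rfl, by simpa using h⟩
  have hDsym : ∀ s : ℝ, 0 ≤ s → transp (D s) = σ • D s := by
    intro b hb
    obtain ⟨Cb, hCb⟩ := (isCompact_Icc (a := (0:ℝ)) (b := b)).exists_bound_of_continuousOn
      (continuousOn_const.add (contΔ.mono Icc_subset_Ici_self))
    set K : ℝ := 4 * Cb with hK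
    set E : ℝ → H →L[ℂ] H := fun s => transp (D s) - σ • D s with hE
    set E' : ℝ → H →L[ℂ] H := fun s =>
      (-2 : ℂ) • ((Υ₀ + Δ s) * E s + E s * transp (Υ₀ + Δ s)) with hE'
    have hcont : ContinuousOn E (Icc 0 b) :=
      ((continuous_transp htransp).comp_continuousOn (contD.mono Icc_subset_Ici_self)).sub
        ((contD.mono Icc_subset_Ici_self).const_smul σ)
    have hder : ∀ x ∈ Ico (0:ℝ) b, HasDerivWithinAt E (E' x) (Ici x) x := by
      intro x hx
      have hD1 := (hderiv x hx.1).2.mono (Ici_subset_Ici.2 hx.1)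
      have hT1 := hasDerivWithinAt_transp htransp hD1
      have h2 := hT1.sub (hD1.const_smul σ)
      have h3 : transp ((-2 : ℂ) • ((Υ₀ + Δ x) * D x + D x * transp (Υ₀ + Δ x)))
            - σ • ((-2 : ℂ) • ((Υ₀ + Δ x) * D x + D x * transp (Υ₀ + Δ x))) = E' x := by
        rw [transp_smul htransp, transp_add htransp, transp_mul htransp, transp_mul htransp,
          transp_transp htransp]
        exact aux_sym_alg σ (Υ₀ + Δ x) (transp (Υ₀ + Δ x)) (D x) (transp (D x))
      rwa [h3] at h2
    have hbnd : ∀ x ∈ Ico (0:ℝ) b, ‖E' x‖ ≤ K * ‖E x‖ + 0 := by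
      intro x hx
      have hxI : x ∈ Icc (0:ℝ) b := ⟨hx.1, hx.2.le⟩
      have hΥb : ‖Υ₀ + Δ x‖ ≤ Cb := hCb x hxI
      have hΥb' : ‖transp (Υ₀ + Δ x)‖ ≤ Cb := (norm_transp_le htransp _).trans hΥb
      have hC0 : 0 ≤ Cb := le_trans (norm_nonneg _) hΥb
      rw [hK]
      exact aux_norm_bound (Υ₀ + Δ x) (transp (Υ₀ + Δ x)) (E x) Cb hΥb hΥb'
    have hEinit : ‖E 0‖ ≤ 0 := by
      simp [hE, hD0, hσD₀]
    have key := norm_le_gronwallBound_of_norm_deriv_right_le hcont hder hEinit hbnd b ⟨hb, le_rfl⟩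
    rw [gronwallBound_ε0_δ0] at key
    have : E b = 0 := by
      rw [← norm_le_zero_iff]
      exact key
    rw [hE] at this
    exact sub_eq_zero.mp this
  have hDDT : ∀ s : ℝ, 0 ≤ s → transp (D s * adjoint (D s)) = adjoint (D s) * D s := by
    intro s hs
    rw [transp_mul htransp, ← adjoint_transp htransp, hDsym s hs,
      map_smulₛₗ (ContinuousLinearMap.adjoint (𝕜 := ℂ) (E := H) (F := H)) σ (D s)]
    rcases hσpm with rfl | rfl <;> simp [smul_mul_smul_comm]
  -- main computation
  intro t ht0
  have hΥd : HasDerivWithinAt (fun s => Υ₀ + Δ s) ((16:ℂ) • (D t * adjoint (D t))) (Ici 0) t :=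
    (hderiv t ht0).1.const_add Υ₀
  have hDd := (hderiv t ht0).2
  set M : ℝ → H →L[ℂ] H := fun s => transp (Υ₀ + Δ s) + (μ : ℂ) • 1 with hM
  have hMd : HasDerivWithinAt M ((16:ℂ) • (adjoint (D t) * D t)) (Ici 0) t := by
    have h1 := (hasDerivWithinAt_transp htransp hΥd).add_const ((μ:ℂ) • (1 : H →L[ℂ] H))
    rwa [transp_smul htransp, hDDT t ht0] at h1
  have hu : IsUnit (M t) := hunitT t ht0
  set R : H →L[ℂ] H := Ring.inverse (M t) with hRdef
  have hRd : HasDerivWithinAt (fun s => Ring.inverse (M s))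
      (-(R * ((16:ℂ) • (adjoint (D t) * D t)) * R)) (Ici 0) t := by
    have h1 : HasFDerivAt Ring.inverse
        (-mulLeftRight ℂ (H →L[ℂ] H) ↑hu.unit⁻¹ ↑hu.unit⁻¹) (M t) := by
      simpa [hu.unit_spec] using hasFDerivAt_ringInverse (𝕜 := ℂ) hu.unit
    have h2 := (h1.restrictScalars ℝ).comp_hasDerivWithinAt t hMd
    have h3 : R = ↑hu.unit⁻¹ := by
      rw [hRdef]
      conv_lhs => rw [← hu.unit_spec]
      rw [Ring.inverse_unit]
    simpa [Function.comp_def, h3, mulLeftRight_apply] using h2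
  have hadjd : HasDerivWithinAt (fun s => adjoint (D s))
      ((-2:ℂ) • (adjoint (D t) * (Υ₀ + Δ t) + transp (Υ₀ + Δ t) * adjoint (D t)))
      (Ici 0) t := by
    have heqf : (fun s => adjoint (D s)) = fun s => star (D s) := by
      ext1 s; rw [star_eq_adjoint]
    have h1 := hDd.star
    have h2 : star ((-2:ℂ) • ((Υ₀ + Δ t) * D t + D t * transp (Υ₀ + Δ t)))
        = (-2:ℂ) • (adjoint (D t) * (Υ₀ + Δ t) + transp (Υ₀ + Δ t) * adjoint (D t)) := by
      rw [star_smul, star_add, star_mul, star_mul]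
      simp only [star_eq_adjoint]
      rw [(hΥsa t ht0).adjoint_eq, adjoint_transp htransp, (hΥsa t ht0).adjoint_eq]
      simp [Complex.star_def, add_comm]
    rw [heqf]
    rw [h2] at h1
    exact h1
  -- product rule for 𝔅
  have hBd : HasDerivWithinAt (fun s => D s * Ring.inverse (M s) * adjoint (D s))
      (((-2:ℂ) • ((Υ₀ + Δ t) * D t + D t * transp (Υ₀ + Δ t)) * R
          + D t * (-(R * ((16:ℂ) • (adjoint (D t) * D t)) * R))) * adjoint (D t)
        + D t * R * ((-2:ℂ) • (adjoint (D t) * (Υ₀ + Δ t)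
          + transp (Υ₀ + Δ t) * adjoint (D t)))) (Ici 0) t :=
    (hDd.mul hRd).mul hadjd
  have hBfun : frakB transp Υ₀ μ Δ D = fun s => D s * Ring.inverse (M s) * adjoint (D s) :=
    rfl
  -- the algebraic identity
  set Y : H →L[ℂ] H := Υ₀ + Δ t with hY
  set T : H →L[ℂ] H := transp (Υ₀ + Δ t) with hT
  set d : H →L[ℂ] H := D t with hd
  set e : H →L[ℂ] H := adjoint (D t) with he
  have hMR : (T + (μ:ℂ) • 1) * R = 1 := Ring.mul_inverse_cancel _ hu
  have hRM : R * (T + (μ:ℂ) • 1) = 1 := Ring.inverse_mul_cancel _ hu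
  have hTR : T * R = 1 - (μ:ℂ) • R := by
    have h1 : T * R + (μ:ℂ) • R = 1 := by
      rw [← hMR, add_mul, smul_mul_assoc, one_mul]
    linear_combination (norm := module) h1
  have hRT : R * T = 1 - (μ:ℂ) • R := by
    have h1 : R * T + (μ:ℂ) • R = 1 := by
      rw [← hRM, mul_add, mul_smul_comm, mul_one]
    linear_combination (norm := module) h1
  have hTRe : T * (R * e) = e - (μ:ℂ) • (R * e) := by
    rw [← mul_assoc, hTR, sub_mul, one_mul, smul_mul_assoc]
  have hRTe : R * (T * e) = e - (μ:ℂ) • (R * e) := by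
    rw [← mul_assoc, hRT, sub_mul, one_mul, smul_mul_assoc]
  have hfrakB : frakB transp Υ₀ μ Δ D t = d * R * e := rfl
  have hfrakD : frakD transp Υ₀ μ Δ D t = Y - (μ:ℂ) • 1 + (4:ℂ) • (d * R * e) := by
    rw [frakD, hfrakB]
  have halg := aux_main_alg Y T R d e (μ:ℂ) hTRe hRTe
  -- conclude for 𝔅
  have goal1 : HasDerivWithinAt (frakB transp Υ₀ μ Δ D)
      ((-2 : ℂ) • (frakD transp Υ₀ μ Δ D t * frakB transp Υ₀ μ Δ D t
          + frakB transp Υ₀ μ Δ D t * frakD transp Υ₀ μ Δ D t)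
        - (4 : ℂ) • (D t * adjoint (D t))) (Ici 0) t := by
    rw [hfrakB, hfrakD, ← hd, ← he, ← halg, hBfun]
    exact hBd
  refine ⟨goal1, ?_⟩
  -- conclude for 𝔇
  have hDd2 := (hΥd.sub_const ((μ:ℂ) • (1 : H →L[ℂ] H))).add (goal1.const_smul (4:ℂ))
  have heqD : ((fun s => (Υ₀ + Δ s) - (μ:ℂ) • (1 : H →L[ℂ] H))
      + (4:ℂ) • frakB transp Υ₀ μ Δ D) = frakD transp Υ₀ μ Δ D := rfl
  rw [heqD] at hDd2
  have halg2 := aux_final (D t * adjoint (D t))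
    (frakD transp Υ₀ μ Δ D t * frakB transp Υ₀ μ Δ D t
      + frakB transp Υ₀ μ Δ D t * frakD transp Υ₀ μ Δ D t)
  rw [halg2] at hDd2
  exact hDd2
end
end

section
/- Let Υ₀ ∈ B(h) be self-adjoint, D₀ ∈ B(h) with D₀^⊤ = ±D₀ and Υ₀ D₀ = D₀ Υ₀^⊤, and let (Δ, D) be a solution of the elliptic flow with data (Υ₀, D₀); set Υ_t := Υ₀ + Δ_t. Then for all s, t ≥ 0 one has Υ_t D_t = D_t Υ_t^⊤ and Υ_t² + 4 D_t D_t* = Υ_s² + 4 D_s D_s*. -/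
open ContinuousLinearMap Set Filter
open scoped InnerProductSpace

noncomputable section

variable {H : Type*} [NormedAddCommGroup H] [InnerProductSpace ℂ H] [CompleteSpace H]

set_option linter.unusedSectionVars false

namespace Conjugation

lemma norm_eq (C : Conjugation H) (x : H) : ‖C.toFun x‖ = ‖x‖ := by
  have h := C.inner_conj x x
  rw [inner_self_eq_norm_sq_to_K, inner_self_eq_norm_sq_to_K] at h
  have h2 : (‖C.toFun x‖ : ℝ) ^ 2 = ‖x‖ ^ 2 := by exact_mod_cast h
  nlinarith [norm_nonneg (C.toFun x), norm_nonneg x]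

lemma inner_left (C : Conjugation H) (a y : H) :
    (inner ℂ (C.toFun a) y : ℂ) = inner ℂ (C.toFun y) a := by
  conv_lhs => rw [← C.invol y]
  exact C.inner_conj a (C.toFun y)

end Conjugation

section Transp

variable {C : Conjugation H} {tr : (H →L[ℂ] H) → (H →L[ℂ] H)} (h : IsTranspose C tr)
include h

lemma tr_adjoint (X : H →L[ℂ] H) : tr (adjoint X) = adjoint (tr X) := by
  rw [eq_adjoint_iff]
  intro x y
  rw [h (adjoint X) x, h X y, adjoint_adjoint]
  rw [C.inner_left (X (C.toFun x)) y]
  rw [show (inner ℂ (C.toFun y) (X (C.toFun x)) : ℂ) = inner ℂ (adjoint X (C.toFun y)) (C.toFun x) from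
    (adjoint_inner_left X (C.toFun x) (C.toFun y)).symm]
  conv_rhs => rw [← inner_conj_symm, C.inner_left (adjoint X (C.toFun y)) x]
  rw [inner_conj_symm]

lemma tr_mul (X Y : H →L[ℂ] H) : tr (X * Y) = tr Y * tr X := by
  ext x
  have hadj : adjoint (X * Y) = adjoint Y * adjoint X := by
    rw [← star_eq_adjoint, ← star_eq_adjoint, ← star_eq_adjoint, star_mul]
  rw [ContinuousLinearMap.mul_apply, h (X * Y) x, h Y, h X, C.invol, hadj, ContinuousLinearMap.mul_apply]

lemma tr_add (X Y : H →L[ℂ] H) : tr (X + Y) = tr X + tr Y := by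
  ext x
  rw [add_apply, h (X + Y) x, h X, h Y, ← C.map_add]
  congr 1
  rw [← star_eq_adjoint, ← star_eq_adjoint, ← star_eq_adjoint, star_add, add_apply]

lemma tr_smul (c : ℂ) (X : H →L[ℂ] H) : tr (c • X) = c • tr X := by
  ext x
  have hadj : adjoint (c • X) = (starRingEnd ℂ) c • adjoint X := by
    rw [← star_eq_adjoint, ← star_eq_adjoint, star_smul]; rfl
  rw [smul_apply, h (c • X) x, h X, hadj, smul_apply, C.map_smul]
  simp

lemma tr_invol (X : H →L[ℂ] H) : tr (tr X) = X := by
  ext x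
  rw [h (tr X) x, ← tr_adjoint h, h (adjoint X), adjoint_adjoint, C.invol, C.invol]

lemma tr_norm_le (X : H →L[ℂ] H) : ‖tr X‖ ≤ ‖X‖ := by
  refine opNorm_le_bound _ (norm_nonneg X) fun x => ?_
  rw [h X x, C.norm_eq]
  calc ‖adjoint X (C.toFun x)‖ ≤ ‖adjoint X‖ * ‖C.toFun x‖ := le_opNorm _ _
    _ = ‖X‖ * ‖x‖ := by
        rw [C.norm_eq, LinearIsometryEquiv.norm_map (adjoint (𝕜 := ℂ) (E := H) (F := H)) X]

lemma tr_norm (X : H →L[ℂ] H) : ‖tr X‖ = ‖X‖ :=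
  le_antisymm (tr_norm_le h X) (by
    conv_lhs => rw [← tr_invol h X]
    exact tr_norm_le h (tr X))

lemma tr_hasDeriv {f : ℝ → H →L[ℂ] H} {f' : H →L[ℂ] H} {s : Set ℝ} {t : ℝ}
    (hf : HasDerivWithinAt f f' s t) :
    HasDerivWithinAt (fun u => tr (f u)) (tr f') s t := by
  let T : (H →L[ℂ] H) →ₗ[ℂ] (H →L[ℂ] H) :=
    { toFun := tr, map_add' := tr_add h, map_smul' := tr_smul h }
  let Tc : (H →L[ℂ] H) →L[ℂ] (H →L[ℂ] H) :=
    T.mkContinuous 1 (fun X => by rw [one_mul]; exact (tr_norm h X).le)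
  exact ((Tc.restrictScalars ℝ).hasFDerivAt).comp_hasDerivWithinAt t hf

end Transp

lemma gronwall_zero {B : Type*} [NormedAddCommGroup B] [NormedSpace ℝ B] {F G : ℝ → B}
    {L : ℝ → ℝ}
    (hF0 : F 0 = 0)
    (hderiv : ∀ t, 0 ≤ t → HasDerivWithinAt F (G t) (Ici 0) t)
    (hL : ContinuousOn L (Ici 0))
    (hbound : ∀ t, 0 ≤ t → ‖G t‖ ≤ L t * ‖F t‖) :
    ∀ t, 0 ≤ t → F t = 0 := by
  intro b hb
  have hFc : ContinuousOn F (Icc 0 b) := fun x hx =>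
    ((hderiv x hx.1).continuousWithinAt).mono Icc_subset_Ici_self
  obtain ⟨K, hK⟩ := (isCompact_Icc (a := (0:ℝ)) (b := b)).exists_bound_of_continuousOn
    (hL.mono Icc_subset_Ici_self)
  have key := norm_le_gronwallBound_of_norm_deriv_right_le (δ := 0) (K := K) (ε := 0)
    (f' := G) hFc
    (fun x hx => (hderiv x hx.1).mono (Ici_subset_Ici.2 hx.1))
    (by simp [hF0])
    (fun x hx => by
      have h1 := hbound x hx.1
      have h2 : L x ≤ K := le_trans (le_abs_self _)
        (by simpa [Real.norm_eq_abs] using hK x (Ico_subset_Icc_self hx))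
      have h3 : L x * ‖F x‖ ≤ K * ‖F x‖ := mul_le_mul_of_nonneg_right h2 (norm_nonneg _)
      linarith)
  have hfin := key b (right_mem_Icc.2 hb)
  rw [gronwallBound_ε0] at hfin
  simp only [zero_mul] at hfin
  exact norm_le_zero_iff.1 hfin

/-- Solutions of `F' = -2(AF + FAᵀ)`, `F 0 = 0` vanish identically. -/
lemma comm_flow_zero {C : Conjugation H} {tr : (H →L[ℂ] H) → (H →L[ℂ] H)}
    (h : IsTranspose C tr) {A F : ℝ → H →L[ℂ] H}
    (hA : ContinuousOn A (Ici 0)) (hF0 : F 0 = 0)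
    (hderiv : ∀ t, 0 ≤ t →
      HasDerivWithinAt F ((-2 : ℂ) • (A t * F t + F t * tr (A t))) (Ici 0) t) :
    ∀ t, 0 ≤ t → F t = 0 := by
  refine gronwall_zero hF0 hderiv (L := fun t => 4 * ‖A t‖)
    (continuous_const.continuousOn.mul hA.norm) ?_
  intro t ht
  have h1 : ‖A t * F t + F t * tr (A t)‖ ≤ ‖A t‖ * ‖F t‖ + ‖F t‖ * ‖tr (A t)‖ :=
    (norm_add_le _ _).trans (add_le_add (norm_mul_le _ _) (norm_mul_le _ _))
  rw [norm_smul, tr_norm h] at *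
  have h2 : ‖(-2 : ℂ)‖ = 2 := by norm_num
  rw [h2]
  show 2 * ‖A t * F t + F t * tr (A t)‖ ≤ 4 * ‖A t‖ * ‖F t‖
  nlinarith [norm_nonneg (F t), norm_nonneg (A t)]

/-- Constant of motion in the commutative case `Υ₀D₀ = D₀Υ₀ᵀ`: along the elliptic flow,
`Υ_t D_t = D_t Υ_tᵀ` and `Υ_t² + 4D_tD_t* = Υ_s² + 4D_sD_s*` for all `s, t ≥ 0`. -/
theorem constant_of_motion_commutative
    (Υ₀ D₀ : H →L[ℂ] H) (hΥ₀ : IsSelfAdjoint Υ₀)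
    (C : Conjugation H) (transp : (H →L[ℂ] H) → (H →L[ℂ] H))
    (htransp : IsTranspose C transp)
    (hD₀sym : transp D₀ = D₀ ∨ transp D₀ = -D₀)
    (hcomm : Υ₀ * D₀ = D₀ * transp Υ₀)
    (Δ D : ℝ → H →L[ℂ] H) (hflow : IsEllipticFlow transp Υ₀ D₀ Δ D) :
    ∀ s t : ℝ, 0 ≤ s → 0 ≤ t →
      (Υ₀ + Δ t) * D t = D t * transp (Υ₀ + Δ t) ∧
      (Υ₀ + Δ t) ^ 2 + (4 : ℂ) • (D t * adjoint (D t))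
        = (Υ₀ + Δ s) ^ 2 + (4 : ℂ) • (D s * adjoint (D s)) := by
  obtain ⟨hΔ0, hD0, hder⟩ := hflow
  set Y : ℝ → H →L[ℂ] H := fun t => Υ₀ + Δ t with hYdef
  have hYd : ∀ t, 0 ≤ t → HasDerivWithinAt Y ((16:ℂ) • (D t * adjoint (D t))) (Ici 0) t :=
    fun t ht => (hder t ht).1.const_add Υ₀
  have hDd : ∀ t, 0 ≤ t →
      HasDerivWithinAt D ((-2:ℂ) • (Y t * D t + D t * transp (Y t))) (Ici 0) t :=
    fun t ht => (hder t ht).2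
  have hYcont : ContinuousOn Y (Ici 0) := fun x hx => ((hYd x hx).continuousWithinAt)
  have hYeq : ∀ u, Y u = Υ₀ + Δ u := fun _ => rfl
  clear_value Y
  -- Step A: self-adjointness of Υ_t
  have hΔsa : ∀ t, 0 ≤ t → star (Δ t) = Δ t := by
    have hzero := gronwall_zero (F := fun u => star (Δ u) - Δ u) (G := fun _ => 0)
      (L := fun _ => 0) (by simp [hΔ0]) ?_ continuousOn_const (by simp)
    · intro t ht
      have := hzero t ht
      rwa [sub_eq_zero] at this
    · intro t ht
      have hstar : star ((16:ℂ) • (D t * adjoint (D t))) = (16:ℂ) • (D t * adjoint (D t)) := by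
        rw [star_smul, star_mul]
        simp [star_eq_adjoint]
      have h1 := ((hder t ht).1.star).sub (hder t ht).1
      refine h1.congr_deriv ?_
      rw [hstar, sub_self]
  have hYsa : ∀ t, 0 ≤ t → star (Y t) = Y t := by
    intro t ht
    rw [hYeq t, star_add, hΔsa t ht, hΥ₀.star_eq]
  have htrsa : ∀ t, 0 ≤ t → star (transp (Y t)) = transp (Y t) := by
    intro t ht
    rw [star_eq_adjoint, ← tr_adjoint htransp, ← star_eq_adjoint, hYsa t ht]
  -- Step B: symmetry of D_t
  obtain ⟨ε, hε1, hε⟩ : ∃ ε : ℂ, (starRingEnd ℂ) ε * ε = 1 ∧ transp D₀ = ε • D₀ := by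
    rcases hD₀sym with h1 | h1
    · exact ⟨1, by norm_num, by simpa using h1⟩
    · exact ⟨-1, by simp, by simpa using h1⟩
  have hDsym : ∀ t, 0 ≤ t → transp (D t) = ε • D t := by
    have hzero := comm_flow_zero htransp (A := Y) hYcont
      (F := fun u => transp (D u) - ε • D u) (by simp [hD0, hε]) ?_
    · intro t ht
      have := hzero t ht
      rwa [sub_eq_zero] at this
    · intro t ht
      have hderD := (tr_hasDeriv htransp (hDd t ht)).sub ((hDd t ht).const_smul ε)
      refine hderD.congr_deriv ?_
      rw [tr_smul htransp, tr_add htransp, tr_mul htransp, tr_mul htransp, tr_invol htransp]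
      simp only [smul_sub, smul_add, mul_sub, sub_mul, mul_smul_comm, smul_mul_assoc, smul_smul]
      module
  -- Step C: commutation
  have hKcomm : ∀ t, 0 ≤ t → Y t * D t = D t * transp (Y t) := by
    have hzero := comm_flow_zero htransp (A := Y) hYcont
      (F := fun u => Y u * D u - D u * transp (Y u)) ?_ ?_
    · intro t ht
      have := hzero t ht
      rwa [sub_eq_zero] at this
    · have hY0 : Y 0 = Υ₀ := by rw [hYeq 0, hΔ0, add_zero]
      show Y 0 * D 0 - D 0 * transp (Y 0) = 0
      rw [hD0, hY0, hcomm, sub_self]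
    · intro t ht
      have htrYd : HasDerivWithinAt (fun u => transp (Y u))
          ((16:ℂ) • (adjoint (D t) * D t)) (Ici 0) t := by
        have h0 := tr_hasDeriv htransp (hYd t ht)
        convert h0 using 1
        rw [tr_smul htransp, tr_mul htransp, tr_adjoint htransp, hDsym t ht]
        have hadj : adjoint (ε • D t) = (starRingEnd ℂ) ε • adjoint (D t) := by
          rw [← star_eq_adjoint, ← star_eq_adjoint, star_smul]; rfl
        rw [hadj, smul_mul_assoc, mul_smul_comm, smul_smul, smul_smul, mul_assoc, hε1, mul_one]
      have hFd := ((hYd t ht).mul (hDd t ht)).sub ((hDd t ht).mul htrYd)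
      refine hFd.congr_deriv ?_
      simp only [smul_sub, smul_add, mul_sub, sub_mul, mul_add, add_mul, mul_smul_comm,
        smul_mul_assoc, smul_smul, mul_assoc]
      module
  -- adjoint version of commutation
  have hK2 : ∀ t, 0 ≤ t → adjoint (D t) * Y t = transp (Y t) * adjoint (D t) := by
    intro t ht
    have h1 := congrArg star (hKcomm t ht)
    rw [star_mul, star_mul, hYsa t ht, htrsa t ht] at h1
    simpa only [star_eq_adjoint] using h1
  -- derivative of adjoint ∘ D
  have hDadjd : ∀ t, 0 ≤ t → HasDerivWithinAt (fun u => adjoint (D u))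
      ((-2:ℂ) • (adjoint (D t) * Y t + transp (Y t) * adjoint (D t))) (Ici 0) t := by
    intro t ht
    have h0 := (hDd t ht).star
    refine h0.congr_deriv ?_
    rw [star_smul, star_add, star_mul, star_mul, hYsa t ht, htrsa t ht]
    simp only [star_eq_adjoint]
    congr 1
    simp
  -- Step D: constant of motion
  set M : ℝ → H →L[ℂ] H := fun u => Y u * Y u + (4:ℂ) • (D u * adjoint (D u)) with hMdef
  have hMd : ∀ t, 0 ≤ t → HasDerivWithinAt M 0 (Ici 0) t := by
    intro t ht
    have h0 := ((hYd t ht).mul (hYd t ht)).add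
      (((hDd t ht).mul (hDadjd t ht)).const_smul (4:ℂ))
    refine h0.congr_deriv ?_
    have h1 := hKcomm t ht
    have h2 := hK2 t ht
    simp only [smul_add, mul_add, add_mul, smul_sub, mul_smul_comm, smul_mul_assoc, smul_smul,
      mul_assoc]
    rw [h2]
    rw [show D t * (transp (Y t) * adjoint (D t)) = Y t * (D t * adjoint (D t)) by
      rw [← mul_assoc, ← h1, mul_assoc]]
    module
  have hMconst : ∀ t, 0 ≤ t → M t = M 0 := by
    intro t ht
    have hzero := gronwall_zero (F := fun u => M u - M 0) (G := fun _ => 0) (L := fun _ => 0)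
      (by simp) (fun u hu => (hMd u hu).sub_const (M 0)) continuousOn_const (by simp) t ht
    rwa [sub_eq_zero] at hzero
  intro s t hs ht
  rw [show Υ₀ + Δ t = Y t from (hYeq t).symm, show Υ₀ + Δ s = Y s from (hYeq s).symm]
  refine ⟨hKcomm t ht, ?_⟩
  have h1 := (hMconst t ht).trans (hMconst s hs).symm
  rw [pow_two, pow_two]
  exact h1
end
end

section
/- Let Υ₀ ∈ B(h) be self-adjoint, D₀ ∈ B(h), and let (Δ, D) be a solution of the elliptic flow with data (Υ₀, D₀); set Υ_t := Υ₀ + Δ_t and K_t := Υ_t D_t - D_t Υ_t^⊤. Then for all 0 ≤ s ≤ t, Υ_t² + 4 D_t D_t* = Υ_s² + 4 D_s D_s* + 8 ∫_s^t (K_τ D_τ* + D_τ K_τ*) dτ, where the integral is the Bochner integral in B(h). -/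
open ContinuousLinearMap Set Filter
open scoped InnerProductSpace

noncomputable section

variable {H : Type*} [NormedAddCommGroup H] [InnerProductSpace ℂ H] [CompleteSpace H]

lemma Conjugation.norm_eq_s17 (C : Conjugation H) (x : H) : ‖C.toFun x‖ = ‖x‖ := by
  have h := C.inner_conj x x
  rw [norm_eq_sqrt_re_inner (𝕜 := ℂ), norm_eq_sqrt_re_inner (𝕜 := ℂ) x, h]

lemma Conjugation.map_sub (C : Conjugation H) (x y : H) :
    C.toFun (x - y) = C.toFun x - C.toFun y := by
  have hneg : C.toFun (-y) = -C.toFun y := by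
    have := C.map_smul (-1) y
    simpa using this
  rw [sub_eq_add_neg, C.map_add, hneg, sub_eq_add_neg]

lemma transp_lip (C : Conjugation H) (transp : (H →L[ℂ] H) → (H →L[ℂ] H))
    (ht : IsTranspose C transp) : LipschitzWith 1 transp := by
  apply LipschitzWith.of_dist_le_mul
  intro X Y
  simp only [dist_eq_norm, one_mul]
  refine ContinuousLinearMap.opNorm_le_bound _ (by positivity) fun x => ?_
  rw [ContinuousLinearMap.sub_apply, ht, ht, ← C.map_sub]
  rw [C.norm_eq_s17]
  have : adjoint X (C.toFun x) - adjoint Y (C.toFun x)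
      = (adjoint X - adjoint Y) (C.toFun x) := by simp
  rw [this]
  calc ‖(adjoint X - adjoint Y) (C.toFun x)‖
      ≤ ‖adjoint X - adjoint Y‖ * ‖C.toFun x‖ := le_opNorm _ _
    _ = ‖X - Y‖ * ‖x‖ := by
        rw [C.norm_eq_s17, ← star_eq_adjoint, ← star_eq_adjoint, ← star_sub, norm_star]
    _ ≤ ↑(1:NNReal) * ‖X - Y‖ * ‖x‖ := by simp

lemma transp_star (C : Conjugation H) (transp : (H →L[ℂ] H) → (H →L[ℂ] H))
    (ht : IsTranspose C transp) (X : H →L[ℂ] H) :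
    star (transp X) = transp (star X) := by
  rw [star_eq_adjoint, star_eq_adjoint]
  ext x
  apply ext_inner_left ℂ
  intro v
  rw [adjoint_inner_right, ht, ht, adjoint_adjoint]
  calc ⟪C.toFun (adjoint X (C.toFun v)), x⟫_ℂ
      = ⟪C.toFun (adjoint X (C.toFun v)), C.toFun (C.toFun x)⟫_ℂ := by rw [C.invol]
    _ = ⟪C.toFun x, adjoint X (C.toFun v)⟫_ℂ := C.inner_conj _ _
    _ = ⟪X (C.toFun x), C.toFun v⟫_ℂ := adjoint_inner_right _ _ _
    _ = ⟪C.toFun (C.toFun v), C.toFun (X (C.toFun x))⟫_ℂ := (C.inner_conj _ _).symm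
    _ = ⟪v, C.toFun (X (C.toFun x))⟫_ℂ := by rw [C.invol]

lemma hasDeriv_star {f : ℝ → H →L[ℂ] H} {f' : H →L[ℂ] H} {s : Set ℝ} {t : ℝ}
    (hf : HasDerivWithinAt f f' s t) :
    HasDerivWithinAt (fun τ => star (f τ)) (star f') s t := by
  have := ((starL' ℝ : (H →L[ℂ] H) ≃L[ℝ] (H →L[ℂ] H)).toContinuousLinearMap.hasFDerivAt
      (x := f t)).comp_hasDerivWithinAt t hf
  simpa [Function.comp_def] using this
lemma delta_selfadj (transp : (H →L[ℂ] H) → (H →L[ℂ] H)) (Υ₀ D₀ : H →L[ℂ] H)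
    (Δ D : ℝ → H →L[ℂ] H) (hflow : IsEllipticFlow transp Υ₀ D₀ Δ D) :
    ∀ t : ℝ, 0 ≤ t → star (Δ t) = Δ t := by
  obtain ⟨hΔ0, _, hderiv⟩ := hflow
  intro t ht
  set g : ℝ → H →L[ℂ] H := fun τ => star (Δ τ) - Δ τ with hg
  have hgd : ∀ x ∈ Ico (0:ℝ) t, HasDerivWithinAt g 0 (Ici x) x := by
    intro x hx
    have h1 := (hderiv x hx.1).1
    have h2 := (hasDeriv_star h1).sub h1
    have h3 : star ((16 : ℂ) • (D x * adjoint (D x))) - (16 : ℂ) • (D x * adjoint (D x)) = 0 := by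
      rw [star_smul, star_mul, ← star_eq_adjoint, star_star]
      simp [star_eq_adjoint]
    rw [h3] at h2
    exact h2.mono (Ici_subset_Ici.2 hx.1)
  have hgc : ContinuousOn g (Icc (0:ℝ) t) := by
    intro τ hτ
    have h1 := (hderiv τ hτ.1).1
    exact (((hasDeriv_star h1).sub h1).continuousWithinAt).mono Icc_subset_Ici_self
  have := constant_of_has_deriv_right_zero hgc hgd t ⟨ht, le_refl t⟩
  have h0 : g 0 = 0 := by simp [hg, hΔ0]
  rw [h0] at this
  have := sub_eq_zero.mp this
  exact this


/-- Towards a constant of motion: with `K_t := Υ_t D_t - D_t Υ_tᵀ`, along the elliptic flow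
`Υ_t² + 4D_tD_t* = Υ_s² + 4D_sD_s* + 8∫_s^t (K_τ D_τ* + D_τ K_τ*) dτ`. -/
theorem constant_of_motion_integral_formula
    (Υ₀ D₀ : H →L[ℂ] H) (hΥ₀ : IsSelfAdjoint Υ₀)
    (C : Conjugation H) (transp : (H →L[ℂ] H) → (H →L[ℂ] H))
    (htransp : IsTranspose C transp)
    (Δ D : ℝ → H →L[ℂ] H) (hflow : IsEllipticFlow transp Υ₀ D₀ Δ D) :
    ∀ s t : ℝ, 0 ≤ s → s ≤ t →
      (Υ₀ + Δ t) ^ 2 + (4 : ℂ) • (D t * adjoint (D t))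
        = (Υ₀ + Δ s) ^ 2 + (4 : ℂ) • (D s * adjoint (D s))
          + (8 : ℂ) • ∫ τ in s..t,
              (((Υ₀ + Δ τ) * D τ - D τ * transp (Υ₀ + Δ τ)) * adjoint (D τ)
                + D τ * adjoint ((Υ₀ + Δ τ) * D τ - D τ * transp (Υ₀ + Δ τ))) := by
  intro s t hs hst
  have hsaΔ := delta_selfadj transp Υ₀ D₀ Δ D hflow
  obtain ⟨hΔ0, hD0, hderiv⟩ := hflow
  -- self-adjointness of Υ τ
  have hsaΥ : ∀ τ : ℝ, 0 ≤ τ → star (Υ₀ + Δ τ) = Υ₀ + Δ τ := by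
    intro τ hτ
    rw [star_add, hΥ₀.star_eq, hsaΔ τ hτ]
  -- star of transp Υ
  have hsaT : ∀ τ : ℝ, 0 ≤ τ → star (transp (Υ₀ + Δ τ)) = transp (Υ₀ + Δ τ) := by
    intro τ hτ
    rw [transp_star C transp htransp, hsaΥ τ hτ]
  set F : ℝ → H →L[ℂ] H := fun τ =>
    (Υ₀ + Δ τ) ^ 2 + (4 : ℂ) • (D τ * star (D τ)) with hF
  set e : ℝ → H →L[ℂ] H := fun τ =>
    ((Υ₀ + Δ τ) * D τ - D τ * transp (Υ₀ + Δ τ)) * star (D τ)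
      + D τ * star ((Υ₀ + Δ τ) * D τ - D τ * transp (Υ₀ + Δ τ)) with he
  -- the derivative
  have hFd : ∀ τ ∈ Ici (0:ℝ), HasDerivWithinAt F ((8:ℂ) • e τ) (Ici 0) τ := by
    intro τ hτ
    have hΔ' := (hderiv τ hτ).1
    have hD' := (hderiv τ hτ).2
    rw [← star_eq_adjoint] at hΔ'
    have hΥ' : HasDerivWithinAt (fun σ => Υ₀ + Δ σ) ((16:ℂ) • (D τ * star (D τ)))
        (Ici 0) τ := hΔ'.const_add Υ₀
    have hsq : HasDerivWithinAt (fun σ => (Υ₀ + Δ σ) ^ 2)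
        ((16:ℂ) • (D τ * star (D τ)) * (Υ₀ + Δ τ)
          + (Υ₀ + Δ τ) * ((16:ℂ) • (D τ * star (D τ)))) (Ici 0) τ := by
      rw [show (fun σ => (Υ₀ + Δ σ) ^ 2) = fun σ => (Υ₀ + Δ σ) * (Υ₀ + Δ σ) from funext fun σ => sq _]
      exact hΥ'.mul hΥ'
    have hDs' : HasDerivWithinAt (fun σ => star (D σ))
        (star ((-2 : ℂ) • ((Υ₀ + Δ τ) * D τ + D τ * transp (Υ₀ + Δ τ)))) (Ici 0) τ :=
      hasDeriv_star hD'
    have hprod : HasDerivWithinAt (fun σ => D σ * star (D σ))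
        ((-2 : ℂ) • ((Υ₀ + Δ τ) * D τ + D τ * transp (Υ₀ + Δ τ)) * star (D τ)
          + D τ * star ((-2 : ℂ) • ((Υ₀ + Δ τ) * D τ + D τ * transp (Υ₀ + Δ τ))))
        (Ici 0) τ := hD'.mul hDs'
    have htot := hsq.add (hprod.const_smul (4:ℂ))
    refine htot.congr_deriv ?_
    symm
    rw [he]
    simp only [star_smul, star_add, star_sub, star_mul, hsaΥ τ hτ, hsaT τ hτ, star_star]
    simp only [smul_mul_assoc, mul_smul_comm, sub_mul, mul_sub, add_mul, mul_add,
      smul_add, smul_sub, smul_smul, mul_assoc]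
    norm_num
    module
  -- continuity pieces
  have hsub : Icc s t ⊆ Ici (0:ℝ) := fun x hx => le_trans hs hx.1
  have hΔc : ContinuousOn Δ (Icc s t) := fun τ hτ =>
    ((hderiv τ (hsub hτ)).1.continuousWithinAt).mono hsub
  have hDc : ContinuousOn D (Icc s t) := fun τ hτ =>
    ((hderiv τ (hsub hτ)).2.continuousWithinAt).mono hsub
  have hΥc : ContinuousOn (fun τ => Υ₀ + Δ τ) (Icc s t) := continuousOn_const.add hΔc
  have hTc : ContinuousOn (fun τ => transp (Υ₀ + Δ τ)) (Icc s t) :=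
    ((transp_lip C transp htransp).continuous).comp_continuousOn hΥc
  have hDsc : ContinuousOn (fun τ => star (D τ)) (Icc s t) :=
    continuous_star.comp_continuousOn hDc
  have hec : ContinuousOn e (Icc s t) := by
    rw [he]
    exact ((hΥc.mul hDc).sub (hDc.mul hTc)).mul hDsc |>.add
      (hDc.mul (continuous_star.comp_continuousOn ((hΥc.mul hDc).sub (hDc.mul hTc))))
  have hint : IntervalIntegrable (fun τ => (8:ℂ) • e τ) MeasureTheory.volume s t := by
    apply ContinuousOn.intervalIntegrable
    rw [uIcc_of_le hst]
    exact hec.const_smul (8:ℂ)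
  have hFc : ContinuousOn F (Icc s t) := fun τ hτ =>
    ((hFd τ (hsub hτ)).continuousWithinAt).mono hsub
  have hFd' : ∀ x ∈ Ioo s t, HasDerivWithinAt F ((8:ℂ) • e x) (Ioi x) x := fun x hx =>
    (hFd x (le_trans hs hx.1.le)).mono fun y hy => le_trans (le_trans hs hx.1.le) hy.le
  have hftc := intervalIntegral.integral_eq_sub_of_hasDeriv_right_of_le hst hFc hFd' hint
  rw [intervalIntegral.integral_smul] at hftc
  have hgoal : (Υ₀ + Δ t) ^ 2 + (4 : ℂ) • (D t * star (D t))
      = (Υ₀ + Δ s) ^ 2 + (4 : ℂ) • (D s * star (D s)) + (8 : ℂ) • ∫ τ in s..t, e τ := by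
    rw [hftc, hF]
    exact (add_sub_cancel _ _).symm
  simpa only [he, hF, star_eq_adjoint] using hgoal
end
end
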